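/- Suppose for each intermediate degree-p step of a tower one has the formula λ' − 1 = p(λ − 1) + Σ_w (e_w − 1) over branch components, where branch indices are multiplicative in towers (e(w/v) = e(w/u)·e(u/v)) and a component u over v either: (branched case) has a unique w over it with e(w/u) = p, or (decomposed case) has exactly p components w_1,…,w_p over it each with e(w_i/u) = 1. Then by induction the formula λ_N − 1 = p^{m}(λ_M − 1) + Σ_w (e_w − 1) holds for a composite of m degree-p steps, using the identities p(e(u/v) − 1) + (e(w/u) − 1) = e(w/v) − 1 when e(w/u) = p and e(w/v) = p·e(u/v), and p(e(u/v) − 1) + Σ_{i=1}^p (e(w_i/u) − 1) = Σ_{i=1}^p (e(w_i/v) − 1) when each e(w_i/u) = 1 and e(w_i/v) = e(u/v). -/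
import Mathlib

lemma kida_aux
    (p m : ℕ)
    (C : ℕ → Type) [∀ n, Fintype (C n)]
    (π : ∀ n, C (n + 1) → C n)
    (eStep : ∀ n, C (n + 1) → ℕ)
    (lam : ℕ → ℤ)
    (e : ∀ n, C n → ℤ)
    (he0 : ∀ u, e 0 u = 1)
    (herec : ∀ n w, e (n + 1) w = e n (π n w) * (eStep n w : ℤ))
    (hdicho : ∀ n, n < m → ∀ u : C n,
      ((∃! w : C (n + 1), π n w = u) ∧ (∀ w, π n w = u → eStep n w = p)) ∨
      (Nat.card {w : C (n + 1) // π n w = u} = p ∧ ∀ w, π n w = u → eStep n w = 1))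
    (hstep : ∀ n, n < m →
      lam (n + 1) - 1 = p * (lam n - 1) + ∑ w : C (n + 1), ((eStep n w : ℤ) - 1)) :
    ∀ n, n ≤ m → lam n - 1 = (p : ℤ) ^ n * (lam 0 - 1) + ∑ u : C n, (e n u - 1) := by
  classical
  intro n
  induction n with
  | zero => intro _; simp [he0]
  | succ n ih =>
    intro hn
    have hn' : n < m := Nat.lt_of_succ_le hn
    have key : ∑ w : C (n + 1), ((e (n + 1) w - 1) - ((eStep n w : ℤ) - 1))
        = ∑ u : C n, (p : ℤ) * (e n u - 1) := by
      rw [← Fintype.sum_fiberwise (π n)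
        (fun w => (e (n + 1) w - 1) - ((eStep n w : ℤ) - 1))]
      refine Finset.sum_congr rfl fun u _ => ?_
      rcases hdicho n hn' u with ⟨⟨w0, hw0, huniq⟩, hep⟩ | ⟨hcard, he1⟩
      · haveI : Unique {w // π n w = u} :=
          ⟨⟨⟨w0, hw0⟩⟩, fun x => Subtype.ext (huniq x.1 x.2)⟩
        have hd : ((default : {w // π n w = u}) : C (n + 1)) = w0 := huniq _ (default : {w // π n w = u}).2
        rw [Fintype.sum_unique, hd, herec, hw0, hep w0 hw0]
        ring
      · have hconst : ∀ x : {w // π n w = u},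
            (e (n + 1) x.1 - 1) - ((eStep n x.1 : ℤ) - 1) = e n u - 1 := by
          rintro ⟨w, hw⟩
          simp only [herec, hw, he1 w hw]
          push_cast; ring
        rw [Finset.sum_congr rfl (fun x _ => hconst x), Finset.sum_const,
          Finset.card_univ, ← Nat.card_eq_fintype_card, hcard, nsmul_eq_mul]
    have hsum : ∑ w : C (n + 1), (e (n + 1) w - 1)
        = (p : ℤ) * ∑ u : C n, (e n u - 1) + ∑ w : C (n + 1), ((eStep n w : ℤ) - 1) := by
      have := key
      rw [Finset.sum_sub_distrib] at this
      rw [Finset.mul_sum]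
      linarith [this]
    rw [hstep n hn', ih (le_of_lt hn'), hsum]
    ring

/-- **(Subsection 7.3: the induction step in Kida's formula.)**
Consider a tower of `m` degree-`p` steps: at level `n` there is a finite set `C n` of
branch components, with projections `π n : C (n+1) → C n`, step branch indices
`eStep n : C (n+1) → ℕ`, and cumulative projections `proj n : C m → C n`.
Assume the branched/decomposed dichotomy at each step: over `u ∈ C n` either there is a
unique `w` with `π n w = u` and `eStep n w = p` (branched case), or there are exactly
`p` such `w` and each has `eStep n w = 1` (decomposed case).  If the `λ`-invariants
satisfy the degree-`p` formula `λ(n+1) − 1 = p(λ(n) − 1) + Σ_w (eStep n w − 1)` at each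
step, then, branch indices being multiplicative in towers, the composite formula
`λ(m) − 1 = p^m (λ(0) − 1) + Σ_{w ∈ C m} (e_w − 1)` holds, where
`e_w = Π_{k<m} eStep k (proj (k+1) w)`. -/
theorem kida_induction_step
    (p m : ℕ) (hp : p.Prime)
    (C : ℕ → Type) [∀ n, Fintype (C n)]
    (π : ∀ n, C (n + 1) → C n)
    (eStep : ∀ n, C (n + 1) → ℕ)
    (proj : ∀ n, C m → C n)
    (hproj_top : proj m = id)
    (hproj : ∀ n, n < m → ∀ w : C m, proj n w = π n (proj (n + 1) w))
    (lam : ℕ → ℤ)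
    (hdicho : ∀ n, n < m → ∀ u : C n,
      ((∃! w : C (n + 1), π n w = u) ∧ (∀ w, π n w = u → eStep n w = p)) ∨
      (Nat.card {w : C (n + 1) // π n w = u} = p ∧ ∀ w, π n w = u → eStep n w = 1))
    (hstep : ∀ n, n < m →
      lam (n + 1) - 1 = p * (lam n - 1) + ∑ w : C (n + 1), ((eStep n w : ℤ) - 1)) :
    lam m - 1 = (p : ℤ) ^ m * (lam 0 - 1) +
      ∑ w : C m, ((∏ k ∈ Finset.range m, (eStep k (proj (k + 1) w) : ℤ)) - 1) := by
  set e : ∀ n, C n → ℤ := fun n =>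
    Nat.rec (motive := fun k => C k → ℤ) (fun _ => 1)
      (fun k ek w => ek (π k w) * (eStep k w : ℤ)) n with he_def
  have he0 : ∀ u, e 0 u = 1 := fun _ => rfl
  have herec : ∀ n w, e (n + 1) w = e n (π n w) * (eStep n w : ℤ) := fun _ _ => rfl
  have main := kida_aux p m C π eStep lam e he0 herec hdicho hstep m le_rfl
  have hprod : ∀ n, n ≤ m → ∀ w : C m,
      e n (proj n w) = ∏ k ∈ Finset.range n, (eStep k (proj (k + 1) w) : ℤ) := by
    intro n
    induction n with
    | zero => intro _ w; simp [he0]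
    | succ n ih =>
      intro hn w
      have hn' : n < m := Nat.lt_of_succ_le hn
      rw [herec, ← hproj n hn' w, ih (le_of_lt hn') w, Finset.prod_range_succ]
  have hfinal : ∀ w : C m,
      e m w = ∏ k ∈ Finset.range m, (eStep k (proj (k + 1) w) : ℤ) := by
    intro w
    have := hprod m le_rfl w
    rwa [hproj_top] at this
  rw [main]
  congr 1
  exact Finset.sum_congr rfl fun w _ => by rw [hfinal w]
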